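/- Let (X, Y) be a martingale coupling on ℝ (i.e., E[Y | X] = X and both X, Y are integrable) whose disintegration kernel κ_x satisfies κ_x = δ_x for all x in a Borel set A. If d_μ and d_ν denote the densities of the laws μ of X and ν of Y with respect to μ + ν, then d_μ ≤ d_ν holds μ-almost everywhere on A. -/

import Mathlib

open MeasureTheory ProbabilityTheory Filter Topology

noncomputable section

/-- Convex order on measures on ℝ. -/
def ConvexOrder (μ ν : Measure ℝ) : Prop :=
  ∀ φ : ℝ → ℝ, ConvexOn ℝ Set.univ φ → Integrable φ μ → Integrable φ ν →
    ∫ x, φ x ∂μ ≤ ∫ x, φ x ∂ν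

/-- Extended convex order (nonnegative convex test functions). -/
def ExtConvexOrder (μ ν : Measure ℝ) : Prop :=
  ∀ φ : ℝ → ℝ, ConvexOn ℝ Set.univ φ → (∀ x, 0 ≤ φ x) → Integrable φ μ → Integrable φ ν →
    ∫ x, φ x ∂μ ≤ ∫ x, φ x ∂ν

/-- π is a coupling of μ and ν. -/
def IsCoupling (π : Measure (ℝ × ℝ)) (μ ν : Measure ℝ) : Prop :=
  π.map Prod.fst = μ ∧ π.map Prod.snd = ν

/-- π is a martingale coupling: a coupling with E[Y|X] = X. -/
def IsMartingaleCoupling (π : Measure (ℝ × ℝ)) (μ ν : Measure ℝ) : Prop :=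
  IsCoupling π μ ν ∧
  ∀ A : Set ℝ, MeasurableSet A →
    ∫ p in (A ×ˢ (Set.univ : Set ℝ)), p.2 ∂π = ∫ p in (A ×ˢ (Set.univ : Set ℝ)), p.1 ∂π

/-- π is a backward Monge transport over the second marginal ν. -/
def IsBackwardMonge (π : Measure (ℝ × ℝ)) (ν : Measure ℝ) : Prop :=
  ∃ h : ℝ → ℝ, Measurable h ∧ π = ν.map (fun y => (h y, y))

/-- f is a backward Monge martingale transport map from ν to f_#ν:
E[Y | f(Y)] = f(Y) where Y ∼ ν. -/
def IsBMMTMap (f : ℝ → ℝ) (ν : Measure ℝ) : Prop :=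
  Measurable f ∧ ∀ A : Set ℝ, MeasurableSet A →
    ∫ y in f ⁻¹' A, y ∂ν = ∫ y in f ⁻¹' A, f y ∂ν

/-- μ ≤_MM ν : existence of a backward Monge martingale transport from μ to ν. -/
def leMM (μ ν : Measure ℝ) : Prop := ∃ f : ℝ → ℝ, IsBMMTMap f ν ∧ ν.map f = μ

/-- θ is the shadow of μ in ν: the ≤_cx-minimal measure θ with μ ≤_cx θ ≤ ν. -/
def IsShadow (ν μ θ : Measure ℝ) : Prop :=
  ConvexOrder μ θ ∧ θ ≤ ν ∧
    ∀ θ' : Measure ℝ, ConvexOrder μ θ' → θ' ≤ ν → ConvexOrder θ θ'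

end

open MeasureTheory ProbabilityTheory in
theorem stmt1 (μ ν : Measure ℝ) [IsProbabilityMeasure μ] [IsProbabilityMeasure ν]
    (hμ : Integrable (fun x => x) μ) (hν : Integrable (fun x => x) ν)
    (π : Measure (ℝ × ℝ)) (κ : Kernel ℝ ℝ) [IsMarkovKernel κ]
    (hπ : IsMartingaleCoupling π μ ν) (hdis : π = μ.compProd κ)
    (A : Set ℝ) (hA : MeasurableSet A) (hκ : ∀ x ∈ A, κ x = Measure.dirac x) :
    ∀ᵐ x ∂(μ.restrict A), μ.rnDeriv (μ + ν) x ≤ ν.rnDeriv (μ + ν) x := by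
  -- Step 1: μ.restrict A ≤ ν
  have hle : μ.restrict A ≤ ν := by
    refine Measure.le_iff.mpr fun s hs => ?_
    have hν_eq : ν s = ∫⁻ x, κ x s ∂μ := by
      rw [← hπ.1.2, hdis, Measure.map_apply measurable_snd hs,
        Measure.compProd_apply (measurable_snd hs)]
      rfl
    rw [hν_eq, Measure.restrict_apply hs]
    calc μ (s ∩ A) = ∫⁻ x in A, s.indicator 1 x ∂μ := by
          simp [lintegral_indicator hs, Measure.restrict_apply hs]
      _ = ∫⁻ x in A, κ x s ∂μ := by
          refine setLIntegral_congr_fun hA (fun x hx => ?_)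
          rw [hκ x hx, Measure.dirac_apply' x hs]
      _ ≤ ∫⁻ x, κ x s ∂μ := setLIntegral_le_lintegral A _
  -- Step 2: rnDeriv comparison a.e. (μ + ν)
  have h2 : (μ.restrict A).rnDeriv (μ + ν) ≤ᵐ[μ + ν] ν.rnDeriv (μ + ν) := by
    refine ae_le_of_forall_setLIntegral_le_of_sigmaFinite
      (Measure.measurable_rnDeriv _ _) fun s hs _ => ?_
    calc ∫⁻ x in s, (μ.restrict A).rnDeriv (μ + ν) x ∂(μ + ν)
        ≤ (μ.restrict A) s := Measure.setLIntegral_rnDeriv_le s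
      _ ≤ ν s := Measure.le_iff'.mp hle s
      _ = ∫⁻ x in s, ν.rnDeriv (μ + ν) x ∂(μ + ν) := by
          rw [Measure.setLIntegral_rnDeriv (Measure.absolutelyContinuous_of_le
            (Measure.le_add_left le_rfl)) s]
  -- Step 3: rnDeriv of restrict is the indicator
  have h3 : (μ.restrict A).rnDeriv (μ + ν) =ᵐ[μ + ν] A.indicator (μ.rnDeriv (μ + ν)) :=
    Measure.rnDeriv_restrict μ (μ + ν) hA
  have h4 : ∀ᵐ x ∂(μ + ν), A.indicator (μ.rnDeriv (μ + ν)) x ≤ ν.rnDeriv (μ + ν) x := by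
    filter_upwards [h2, h3] with x hx2 hx3
    rw [← hx3]; exact hx2
  -- Transfer to μ.restrict A
  have hac : μ.restrict A ≪ μ + ν :=
    (Measure.restrict_le_self).absolutelyContinuous.trans
      (Measure.absolutelyContinuous_of_le (Measure.le_add_right le_rfl))
  filter_upwards [hac h4, ae_restrict_mem hA] with x hx hxA
  rwa [Set.indicator_of_mem hxA] at hx
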